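/- Let E be a right module over the real quaternions ℍ and F a left module over ℍ, both also real vector spaces on which the real scalars act compatibly with the quaternionic actions. Let Φ : E × F → ℝ be additive in each variable, satisfy Φ(x·q, y) = Φ(x, q·y) for all q ∈ ℍ, x ∈ E, y ∈ F (balance property), and satisfy rΦ(x, y) = Φ(rx, y) = Φ(x, ry) for all r ∈ ℝ. Then there exists a map Ψ : F × E → ℍ, additive in each variable, satisfying Ψ(q·y, x) = qΨ(y, x) and Ψ(y, x·q) = Ψ(y, x)q for all q ∈ ℍ, such that Φ(x, y) = Re(Ψ(y, x)) for all x ∈ E, y ∈ F. -/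

import Mathlib

private def mkq (a b c d : ℝ) : Quaternion ℝ := ⟨a,b,c,d⟩
@[simp] private lemma mkq_re (a b c d : ℝ) : (mkq a b c d).re = a := rfl
@[simp] private lemma mkq_imI (a b c d : ℝ) : (mkq a b c d).imI = b := rfl
@[simp] private lemma mkq_imJ (a b c d : ℝ) : (mkq a b c d).imJ = c := rfl
@[simp] private lemma mkq_imK (a b c d : ℝ) : (mkq a b c d).imK = d := rfl

private noncomputable def iq : Quaternion ℝ := mkq 0 1 0 0
private noncomputable def jq : Quaternion ℝ := mkq 0 0 1 0
private noncomputable def kq : Quaternion ℝ := mkq 0 0 0 1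

/-- Every balanced ℝ-bilinear form `Φ : E × F → ℝ` (E a right ℍ-module, F a left ℍ-module,
both real vector spaces with compatible actions) is the real part of a left and right
ℍ-linear form `Ψ : F × E → ℍ`. -/
theorem balanced_bilinear_form_is_re_of_H_linear_form
    (E F : Type*) [AddCommGroup E] [AddCommGroup F]
    [Module ℝ E] [Module ℝ F]
    [Module (Quaternion ℝ)ᵐᵒᵖ E] [Module (Quaternion ℝ) F]
    [IsScalarTower ℝ (Quaternion ℝ)ᵐᵒᵖ E] [IsScalarTower ℝ (Quaternion ℝ) F]
    (Φ : E × F → ℝ)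
    (hadd₁ : ∀ (x₁ x₂ : E) (y : F), Φ (x₁ + x₂, y) = Φ (x₁, y) + Φ (x₂, y))
    (hadd₂ : ∀ (x : E) (y₁ y₂ : F), Φ (x, y₁ + y₂) = Φ (x, y₁) + Φ (x, y₂))
    (hbal : ∀ (q : Quaternion ℝ) (x : E) (y : F),
      Φ (MulOpposite.op q • x, y) = Φ (x, q • y))
    (hr₁ : ∀ (r : ℝ) (x : E) (y : F), r * Φ (x, y) = Φ (r • x, y))
    (hr₂ : ∀ (r : ℝ) (x : E) (y : F), r * Φ (x, y) = Φ (x, r • y)) :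
    ∃ Ψ : F × E → Quaternion ℝ,
      (∀ (y₁ y₂ : F) (x : E), Ψ (y₁ + y₂, x) = Ψ (y₁, x) + Ψ (y₂, x)) ∧
      (∀ (y : F) (x₁ x₂ : E), Ψ (y, x₁ + x₂) = Ψ (y, x₁) + Ψ (y, x₂)) ∧
      (∀ (q : Quaternion ℝ) (y : F) (x : E), Ψ (q • y, x) = q * Ψ (y, x)) ∧
      (∀ (q : Quaternion ℝ) (y : F) (x : E),
        Ψ (y, MulOpposite.op q • x) = Ψ (y, x) * q) ∧
      (∀ (x : E) (y : F), Φ (x, y) = (Ψ (y, x)).re) := by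
  have key : ∀ (q : Quaternion ℝ) (y : F) (x : E),
      Φ (x, q • y) = q.re * Φ (x, y) + q.imI * Φ (x, iq • y)
        + q.imJ * Φ (x, jq • y) + q.imK * Φ (x, kq • y) := by
    intro q y x
    have hq : q = q.re • (1 : Quaternion ℝ) + q.imI • iq + q.imJ • jq + q.imK • kq := by
      ext <;> simp [iq, jq, kq, Quaternion.re_one, Quaternion.imI_one, Quaternion.imJ_one, Quaternion.imK_one, Quaternion.re_smul]
    calc Φ (x, q • y)
        = Φ (x, (q.re • (1 : Quaternion ℝ) + q.imI • iq + q.imJ • jq + q.imK • kq) • y) := by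
          rw [← hq]
      _ = Φ (x, q.re • y + q.imI • (iq • y) + q.imJ • (jq • y) + q.imK • (kq • y)) := by
          rw [add_smul, add_smul, add_smul, smul_assoc, smul_assoc, smul_assoc, smul_assoc,
            one_smul]
      _ = _ := by rw [hadd₂, hadd₂, hadd₂, ← hr₂, ← hr₂, ← hr₂, ← hr₂]
  refine ⟨fun p => mkq (Φ (p.2, p.1)) (-Φ (p.2, iq • p.1)) (-Φ (p.2, jq • p.1)) (-Φ (p.2, kq • p.1)),
    ?_, ?_, ?_, ?_, ?_⟩
  · intro y₁ y₂ x
    ext <;> simp [smul_add, hadd₂] <;> ring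
  · intro y x₁ x₂
    ext <;> simp [hadd₁] <;> ring
  · intro q y x
    ext
    · show Φ (x, q • y) = _
      rw [key]
      simp [Quaternion.re_mul]
      try ring
    · show -Φ (x, iq • q • y) = _
      rw [← mul_smul, key]
      simp [Quaternion.imI_mul, iq, Quaternion.re_mul, Quaternion.imJ_mul, Quaternion.imK_mul]
      try ring
    · show -Φ (x, jq • q • y) = _
      rw [← mul_smul, key]
      simp [Quaternion.imJ_mul, jq, Quaternion.re_mul, Quaternion.imI_mul, Quaternion.imK_mul]
      try ring
    · show -Φ (x, kq • q • y) = _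
      rw [← mul_smul, key]
      simp [Quaternion.imK_mul, kq, Quaternion.re_mul, Quaternion.imI_mul, Quaternion.imJ_mul]
      try ring
  · intro q y x
    ext
    · show Φ (MulOpposite.op q • x, y) = _
      rw [hbal, key]
      simp [Quaternion.re_mul]
      try ring
    · show -Φ (MulOpposite.op q • x, iq • y) = _
      rw [hbal, ← mul_smul, key]
      simp [Quaternion.imI_mul, iq, Quaternion.re_mul, Quaternion.imJ_mul, Quaternion.imK_mul]
      try ring
    · show -Φ (MulOpposite.op q • x, jq • y) = _
      rw [hbal, ← mul_smul, key]
      simp [Quaternion.imJ_mul, jq, Quaternion.re_mul, Quaternion.imI_mul, Quaternion.imK_mul]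
      try ring
    · show -Φ (MulOpposite.op q • x, kq • y) = _
      rw [hbal, ← mul_smul, key]
      simp [Quaternion.imK_mul, kq, Quaternion.re_mul, Quaternion.imI_mul, Quaternion.imJ_mul]
      try ring
  · intro x y
    rfl
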